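/- For every n ≥ 1, the assignment ι(β_i) = β_i for 1 ≤ i ≤ n−1 and ι(X_i) = β_{i−1}β_{i−2}⋯β_1·β_0²·β_1⁻¹⋯β_{i−2}⁻¹β_{i−1}⁻¹ for 1 ≤ i ≤ n extends to a well-defined group homomorphism ι : Br_n^1 → Br_{n+1}, and this homomorphism is injective. -/

import Mathlib

/-- The Artin braid relations on `N` generators `β_0, …, β_{N-1}`, recorded as relators:
`β_iβ_{i+1}β_i = β_{i+1}β_iβ_{i+1}` and `β_iβ_j = β_jβ_i` for `|i-j| ≥ 2`. -/
def braidRels (N : ℕ) : Set (FreeGroup (Fin N)) :=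
  { r | (∃ i j : Fin N, (i : ℕ) + 1 = (j : ℕ) ∧
          r = FreeGroup.of i * FreeGroup.of j * FreeGroup.of i *
              (FreeGroup.of j * FreeGroup.of i * FreeGroup.of j)⁻¹) ∨
        (∃ i j : Fin N, (i : ℕ) + 2 ≤ (j : ℕ) ∧
          r = FreeGroup.of i * FreeGroup.of j * (FreeGroup.of j * FreeGroup.of i)⁻¹) }

/-- The braid group on `N+1` strands, presented on the `N` generators `β_0, …, β_{N-1}`
subject to the Artin relations. -/
abbrev Braid (N : ℕ) : Type := PresentedGroup (braidRels N)

/-- Generators of the braid group with a frozen strand `Br^1_{m+1}`: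
`X i` (for `i : Fin (m+1)`) is the generator `X_{i+1}`, and `beta i` (for `i : Fin m`) is the
generator `β_{i+1}` (so the 1-based labels are `X_1, …, X_{m+1}` and `β_1, …, β_m`). -/
inductive FGen (m : ℕ) : Type
  | X : Fin (m + 1) → FGen m
  | beta : Fin m → FGen m

/-- The generator `X_{i+1}` as an element of the free group. -/
def Y {m : ℕ} (i : Fin (m + 1)) : FreeGroup (FGen m) := FreeGroup.of (FGen.X i)

/-- The generator `β_{i+1}` as an element of the free group. -/
def B {m : ℕ} (i : Fin m) : FreeGroup (FGen m) := FreeGroup.of (FGen.beta i)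

/-- The defining relators of the braid group with a frozen strand `Br^1_{m+1}`:
the braid relations among the `β`'s together with
`β_iX_iβ_i⁻¹ = X_{i+1}`, `β_iX_{i+1}β_i⁻¹ = X_{i+1}⁻¹X_iX_{i+1}` and `β_iX_jβ_i⁻¹ = X_j`
for `j ≠ i, i+1`. -/
def frozenRels (m : ℕ) : Set (FreeGroup (FGen m)) :=
  { r | (∃ i j : Fin m, (i : ℕ) + 1 = (j : ℕ) ∧
          r = B i * B j * B i * (B j * B i * B j)⁻¹) ∨
        (∃ i j : Fin m, (i : ℕ) + 2 ≤ (j : ℕ) ∧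
          r = B i * B j * (B j * B i)⁻¹) ∨
        (∃ i : Fin m, r = B i * Y i.castSucc * (B i)⁻¹ * (Y i.succ)⁻¹) ∨
        (∃ i : Fin m,
          r = B i * Y i.succ * (B i)⁻¹ * ((Y i.succ)⁻¹ * Y i.castSucc * Y i.succ)⁻¹) ∨
        (∃ (i : Fin m) (j : Fin (m + 1)), (j : ℕ) ≠ (i : ℕ) ∧ (j : ℕ) ≠ (i : ℕ) + 1 ∧
          r = B i * Y j * (B i)⁻¹ * (Y j)⁻¹) }

/-- The braid group with a frozen strand `Br^1_{m+1}` (so `Br^1_n` with `n = m+1 ≥ 1`). -/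
abbrev BrFrozen (m : ℕ) : Type := PresentedGroup (frozenRels m)

/-- The generator `β_k` of the braid group on `m+2` strands (junk value `1` out of range). -/
def bb (m : ℕ) (k : ℕ) : Braid (m + 1) :=
  if h : k < m + 1 then PresentedGroup.of (⟨k, h⟩ : Fin (m + 1)) else 1

/-- The word `β_k β_{k-1} ⋯ β_1 · β_0² · β_1⁻¹ ⋯ β_k⁻¹` in the braid group on `m+2`
strands; it is the prescribed image of the generator `X_{k+1}`. -/
def Xword (m : ℕ) (k : ℕ) : Braid (m + 1) :=
  (((List.range k).map fun j => bb m (k - j)).prod) * bb m 0 * bb m 0 *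
    (((List.range k).map fun j => bb m (k - j)).prod)⁻¹

namespace FrozenEmbed

lemma pres_rel {α : Type*} {rels : Set (FreeGroup α)} {r : FreeGroup α} (h : r ∈ rels) :
    PresentedGroup.mk rels r = 1 :=
  (QuotientGroup.eq_one_iff r).mpr (Subgroup.subset_normalClosure h)

variable {m : ℕ}

lemma braid_rel1 (i j : Fin (m+1)) (hij : (i:ℕ)+1 = (j:ℕ)) :
    (PresentedGroup.of i : Braid (m+1)) * PresentedGroup.of j * PresentedGroup.of i
      = PresentedGroup.of j * PresentedGroup.of i * PresentedGroup.of j := by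
  have h1 := pres_rel (rels := braidRels (m+1))
    (Or.inl ⟨i, j, hij, rfl⟩ : _ ∈ braidRels (m+1))
  rw [map_mul, map_mul, map_inv, map_mul, map_mul, mul_inv_eq_one] at h1
  exact h1

lemma braid_rel2 (i j : Fin (m+1)) (hij : (i:ℕ)+2 ≤ (j:ℕ)) :
    (PresentedGroup.of i : Braid (m+1)) * PresentedGroup.of j
      = PresentedGroup.of j * PresentedGroup.of i := by
  have h1 := pres_rel (rels := braidRels (m+1))
    (Or.inr ⟨i, j, hij, rfl⟩ : _ ∈ braidRels (m+1))
  rw [map_mul, map_inv, map_mul, mul_inv_eq_one] at h1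
  exact h1

lemma bb_braid {a b : ℕ} (h : a + 1 = b) (hb : b ≤ m) :
    bb m a * bb m b * bb m a = bb m b * bb m a * bb m b := by
  have ha' : a < m + 1 := by omega
  have hb' : b < m + 1 := by omega
  rw [bb, dif_pos ha', bb, dif_pos hb']
  exact braid_rel1 ⟨a, ha'⟩ ⟨b, hb'⟩ h

lemma bb_comm {a b : ℕ} (h : a + 2 ≤ b) (hb : b ≤ m) :
    bb m a * bb m b = bb m b * bb m a := by
  have ha' : a < m + 1 := by omega
  have hb' : b < m + 1 := by omega
  rw [bb, dif_pos ha', bb, dif_pos hb']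
  exact braid_rel2 ⟨a, ha'⟩ ⟨b, hb'⟩ h

end FrozenEmbed
namespace FrozenEmbed
variable {m : ℕ}

/-- generator `β_{i+1}` of the frozen braid group, `ℕ`-indexed with junk value 1. -/
def bg (m : ℕ) (i : ℕ) : BrFrozen m :=
  if h : i < m then PresentedGroup.of (FGen.beta ⟨i, h⟩) else 1

/-- generator `X_{i+1}` of the frozen braid group, `ℕ`-indexed with junk value 1. -/
def xg (m : ℕ) (i : ℕ) : BrFrozen m :=
  if h : i < m + 1 then PresentedGroup.of (FGen.X ⟨i, h⟩) else 1

lemma bg_eq {a : ℕ} (h : a < m) : bg m a = PresentedGroup.of (FGen.beta ⟨a, h⟩) := dif_pos h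
lemma xg_eq {a : ℕ} (h : a < m + 1) : xg m a = PresentedGroup.of (FGen.X ⟨a, h⟩) := dif_pos h

lemma of_mk {α : Type*} {rels : Set (FreeGroup α)} (x : α) :
    PresentedGroup.mk rels (FreeGroup.of x) = PresentedGroup.of x := rfl

lemma fr1 {a b : ℕ} (h : a + 1 = b) (hb : b < m) :
    bg m a * bg m b * bg m a = bg m b * bg m a * bg m b := by
  have ha : a < m := by omega
  have h1 := pres_rel (rels := frozenRels m) (Or.inl ⟨⟨a, ha⟩, ⟨b, hb⟩, h, rfl⟩)
  simp only [B, map_mul, map_inv, mul_inv_eq_one, of_mk] at h1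
  rw [bg_eq ha, bg_eq hb]
  exact h1

lemma fr2 {a b : ℕ} (h : a + 2 ≤ b) (hb : b < m) :
    bg m a * bg m b = bg m b * bg m a := by
  have ha : a < m := by omega
  have h1 := pres_rel (rels := frozenRels m) (Or.inr (Or.inl ⟨⟨a, ha⟩, ⟨b, hb⟩, h, rfl⟩))
  simp only [B, map_mul, map_inv, mul_inv_eq_one, of_mk] at h1
  rw [bg_eq ha, bg_eq hb]
  exact h1

lemma fr3 {a : ℕ} (ha : a < m) :
    bg m a * xg m a = xg m (a+1) * bg m a := by
  have h1 := pres_rel (rels := frozenRels m) (Or.inr (Or.inr (Or.inl ⟨⟨a, ha⟩, rfl⟩)))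
  simp only [B, Y, map_mul, map_inv, mul_inv_eq_one, of_mk] at h1
  rw [bg_eq ha, xg_eq (show a < m + 1 by omega), xg_eq (show a + 1 < m + 1 by omega)]
  have hc : (Fin.castSucc ⟨a, ha⟩ : Fin (m+1)) = ⟨a, by omega⟩ := rfl
  have hs : (Fin.succ ⟨a, ha⟩ : Fin (m+1)) = ⟨a+1, by omega⟩ := rfl
  rw [hc, hs] at h1
  calc PresentedGroup.of (FGen.beta ⟨a, ha⟩) * PresentedGroup.of (FGen.X ⟨a, by omega⟩)
      = (PresentedGroup.of (FGen.beta ⟨a, ha⟩) * PresentedGroup.of (FGen.X ⟨a, by omega⟩)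
          * (PresentedGroup.of (FGen.beta ⟨a, ha⟩))⁻¹) * PresentedGroup.of (FGen.beta ⟨a, ha⟩) := by
        group
    _ = PresentedGroup.of (FGen.X ⟨a+1, by omega⟩) * PresentedGroup.of (FGen.beta ⟨a, ha⟩) := by
        rw [h1]

lemma fr4 {a : ℕ} (ha : a < m) :
    bg m a * xg m (a+1) * (bg m a)⁻¹ = (xg m (a+1))⁻¹ * xg m a * xg m (a+1) := by
  have h1 := pres_rel (rels := frozenRels m) (Or.inr (Or.inr (Or.inr (Or.inl ⟨⟨a, ha⟩, rfl⟩))))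
  simp only [B, Y, map_mul, map_inv, mul_inv_eq_one, of_mk] at h1
  rw [bg_eq ha, xg_eq (show a < m + 1 by omega), xg_eq (show a + 1 < m + 1 by omega)]
  have hc : (Fin.castSucc ⟨a, ha⟩ : Fin (m+1)) = ⟨a, by omega⟩ := rfl
  have hs : (Fin.succ ⟨a, ha⟩ : Fin (m+1)) = ⟨a+1, by omega⟩ := rfl
  rw [hc, hs] at h1
  exact h1

lemma fr5 {a b : ℕ} (hba : b ≠ a) (hba1 : b ≠ a + 1) (ha : a < m) (hb : b < m + 1) :
    bg m a * xg m b = xg m b * bg m a := by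
  have h1 := pres_rel (rels := frozenRels m)
    (Or.inr (Or.inr (Or.inr (Or.inr ⟨⟨a, ha⟩, ⟨b, hb⟩, hba, hba1, rfl⟩))))
  simp only [B, Y, map_mul, map_inv, mul_inv_eq_one, of_mk] at h1
  rw [bg_eq ha, xg_eq hb]
  calc PresentedGroup.of (FGen.beta ⟨a, ha⟩) * PresentedGroup.of (FGen.X ⟨b, hb⟩)
      = (PresentedGroup.of (FGen.beta ⟨a, ha⟩) * PresentedGroup.of (FGen.X ⟨b, hb⟩)
          * (PresentedGroup.of (FGen.beta ⟨a, ha⟩))⁻¹) * PresentedGroup.of (FGen.beta ⟨a, ha⟩) := by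
        group
    _ = PresentedGroup.of (FGen.X ⟨b, hb⟩) * PresentedGroup.of (FGen.beta ⟨a, ha⟩) := by rw [h1]

/-- `β_a X_a X_{a+1} = X_a X_{a+1} β_a`. -/
lemma fr34 {a : ℕ} (ha : a < m) :
    bg m a * (xg m a * xg m (a+1)) = (xg m a * xg m (a+1)) * bg m a := by
  have h3 := fr3 (m := m) ha
  have h4 := fr4 (m := m) ha
  have h4' : bg m a * xg m (a+1) = (xg m (a+1))⁻¹ * xg m a * xg m (a+1) * bg m a := by
    calc bg m a * xg m (a+1) = (bg m a * xg m (a+1) * (bg m a)⁻¹) * bg m a := by group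
      _ = _ := by rw [h4]
  calc bg m a * (xg m a * xg m (a+1))
      = (bg m a * xg m a) * xg m (a+1) := by rw [mul_assoc]
    _ = xg m (a+1) * (bg m a * xg m (a+1)) := by rw [h3, mul_assoc]
    _ = xg m (a+1) * ((xg m (a+1))⁻¹ * xg m a * xg m (a+1) * bg m a) := by rw [h4']
    _ = (xg m a * xg m (a+1)) * bg m a := by group

end FrozenEmbed
namespace FrozenEmbed
variable {m : ℕ}

/-- The coset space on which `Braid (m+1)` acts: a pair (coset index, frozen-group element). -/
abbrev Cos (m : ℕ) : Type := Fin (m + 2) × BrFrozen m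

/-- Action of the generator `β_k` on `Cos m`. -/
def act (k : Fin (m + 1)) : Cos m → Cos m
  | (p, w) =>
    if (p : ℕ) = (k : ℕ) then (⟨(k : ℕ) + 1, Nat.succ_lt_succ k.isLt⟩, w)
    else if (p : ℕ) = (k : ℕ) + 1 then
      (⟨(k : ℕ), Nat.lt_succ_of_lt k.isLt⟩, xg m (k : ℕ) * w)
    else if (p : ℕ) < (k : ℕ) then (p, bg m ((k : ℕ) - 1) * w)
    else (p, bg m (k : ℕ) * w)

def actInv (k : Fin (m + 1)) : Cos m → Cos m
  | (p, w) =>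
    if (p : ℕ) = (k : ℕ) + 1 then (⟨(k : ℕ), Nat.lt_succ_of_lt k.isLt⟩, w)
    else if (p : ℕ) = (k : ℕ) then
      (⟨(k : ℕ) + 1, Nat.succ_lt_succ k.isLt⟩, (xg m (k : ℕ))⁻¹ * w)
    else if (p : ℕ) < (k : ℕ) then (p, (bg m ((k : ℕ) - 1))⁻¹ * w)
    else (p, (bg m (k : ℕ))⁻¹ * w)

lemma act_of_eq (k : Fin (m+1)) (p : Fin (m+2)) (w : BrFrozen m) (h : (p : ℕ) = (k : ℕ)) :
    act k (p, w) = (⟨(k : ℕ) + 1, Nat.succ_lt_succ k.isLt⟩, w) := by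
  rw [act, if_pos h]

lemma act_of_eq1 (k : Fin (m+1)) (p : Fin (m+2)) (w : BrFrozen m) (h : (p : ℕ) = (k : ℕ) + 1) :
    act k (p, w) = (⟨(k : ℕ), Nat.lt_succ_of_lt k.isLt⟩, xg m (k : ℕ) * w) := by
  rw [act, if_neg (by omega), if_pos h]

lemma act_of_lt (k : Fin (m+1)) (p : Fin (m+2)) (w : BrFrozen m) (h : (p : ℕ) < (k : ℕ)) :
    act k (p, w) = (p, bg m ((k : ℕ) - 1) * w) := by
  rw [act, if_neg (by omega), if_neg (by omega), if_pos h]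

lemma act_of_gt (k : Fin (m+1)) (p : Fin (m+2)) (w : BrFrozen m) (h : (k : ℕ) + 2 ≤ (p : ℕ)) :
    act k (p, w) = (p, bg m (k : ℕ) * w) := by
  rw [act, if_neg (by omega), if_neg (by omega), if_neg (by omega)]

lemma act_actInv (k : Fin (m + 1)) (s : Cos m) : act k (actInv k s) = s := by
  obtain ⟨p, w⟩ := s
  have hp : (p : ℕ) < m + 2 := p.isLt
  rcases Nat.lt_trichotomy (p : ℕ) (k : ℕ) with h | h | h
  · rw [actInv, if_neg (by omega), if_neg (by omega), if_pos h,
      act_of_lt k p _ h, mul_inv_cancel_left]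
  · rw [actInv, if_neg (by omega), if_pos h,
      act_of_eq1 k _ _ (by simp), mul_inv_cancel_left]
    refine Prod.ext (Fin.ext (by simp [h])) rfl
  · rcases Nat.lt_or_ge (p : ℕ) ((k : ℕ) + 2) with h2 | h2
    · have hpk : (p : ℕ) = (k : ℕ) + 1 := by omega
      rw [actInv, if_pos hpk, act_of_eq k _ _ (by simp)]
      refine Prod.ext (Fin.ext (by simp [hpk])) rfl
    · rw [actInv, if_neg (by omega), if_neg (by omega), if_neg (by omega),
        act_of_gt k p _ h2, mul_inv_cancel_left]

lemma actInv_act (k : Fin (m + 1)) (s : Cos m) : actInv k (act k s) = s := by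
  obtain ⟨p, w⟩ := s
  have hp : (p : ℕ) < m + 2 := p.isLt
  rcases Nat.lt_trichotomy (p : ℕ) (k : ℕ) with h | h | h
  · rw [act_of_lt k p w h, actInv, if_neg (by omega), if_neg (by omega), if_pos h,
      inv_mul_cancel_left]
  · rw [act_of_eq k p w h, actInv, if_pos (by simp)]
    refine Prod.ext (Fin.ext (by simp [h])) rfl
  · rcases Nat.lt_or_ge (p : ℕ) ((k : ℕ) + 2) with h2 | h2
    · have hpk : (p : ℕ) = (k : ℕ) + 1 := by omega
      rw [act_of_eq1 k p w hpk, actInv, if_neg (by simp), if_pos (by simp), inv_mul_cancel_left]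
      refine Prod.ext (Fin.ext (by simp [hpk])) rfl
    · rw [act_of_gt k p w h2, actInv, if_neg (by omega), if_neg (by omega), if_neg (by omega),
        inv_mul_cancel_left]

/-- The permutation of `Cos m` induced by the braid generator `β_k`. -/
def sPerm (k : Fin (m + 1)) : Equiv.Perm (Cos m) :=
  ⟨act k, actInv k, actInv_act k, act_actInv k⟩

end FrozenEmbed
namespace FrozenEmbed
variable {m : ℕ}

lemma act_braid (k l : Fin (m+1)) (hkl : (k : ℕ) + 1 = (l : ℕ)) (s : Cos m) :
    act k (act l (act k s)) = act l (act k (act l s)) := by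
  obtain ⟨p, w⟩ := s
  have hl : (l : ℕ) < m + 1 := l.isLt
  have hp : (p : ℕ) < m + 2 := p.isLt
  set pK : Fin (m+2) := ⟨(k : ℕ), Nat.lt_succ_of_lt k.isLt⟩ with hpK
  set pK1 : Fin (m+2) := ⟨(k : ℕ) + 1, Nat.succ_lt_succ k.isLt⟩ with hpK1
  set pL : Fin (m+2) := ⟨(l : ℕ), Nat.lt_succ_of_lt l.isLt⟩ with hpL
  set pL1 : Fin (m+2) := ⟨(l : ℕ) + 1, Nat.succ_lt_succ l.isLt⟩ with hpL1
  rcases Nat.lt_trichotomy (p : ℕ) (k : ℕ) with h | h | h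
  · -- p < k
    rw [act_of_lt k p w h, act_of_lt l p _ (by omega), act_of_lt k p _ h,
        act_of_lt l p w (by omega), act_of_lt k p _ h, act_of_lt l p _ (by omega)]
    have : bg m ((k:ℕ)-1) * (bg m ((l:ℕ)-1) * (bg m ((k:ℕ)-1) * w))
        = bg m ((l:ℕ)-1) * (bg m ((k:ℕ)-1) * (bg m ((l:ℕ)-1) * w)) := by
      simp only [← mul_assoc]
      rw [fr1 (show (k:ℕ)-1+1 = (l:ℕ)-1 by omega) (show (l:ℕ)-1 < m by omega)]
    rw [this]
  · -- p = k
    rw [act_of_eq k p w h, act_of_eq l pK1 w (by simp [hpK1]; omega),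
        act_of_gt k pL1 w (by simp [hpL1]; omega),
        act_of_lt l p w (by omega), act_of_eq k p _ h,
        act_of_eq l pK1 _ (by simp [hpK1]; omega),
        show (l:ℕ)-1 = (k:ℕ) by omega]
  · rcases Nat.lt_or_ge (p : ℕ) ((k : ℕ) + 2) with h2 | h2
    · -- p = k+1 = l
      have hpk : (p : ℕ) = (k : ℕ) + 1 := by omega
      rw [act_of_eq1 k p w hpk, act_of_lt l pK _ (by simp [hpK]; omega),
          act_of_eq k pK _ (by simp [hpK]),
          act_of_eq l p w (by omega), act_of_gt k pL1 w (by simp [hpL1]; omega),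
          act_of_eq1 l pL1 _ (by simp [hpL1])]
      refine Prod.ext (Fin.ext (by simp [hpK1, hpL]; omega)) ?_
      show bg m ((l:ℕ)-1) * (xg m (k:ℕ) * w) = xg m (l:ℕ) * (bg m (k:ℕ) * w)
      simp only [← mul_assoc]
      rw [show (l:ℕ)-1 = (k:ℕ) by omega, fr3 (show (k:ℕ) < m by omega), hkl]
    · rcases Nat.lt_or_ge (p : ℕ) ((k : ℕ) + 3) with h3 | h3
      · -- p = k+2 = l+1
        have hpl : (p : ℕ) = (l : ℕ) + 1 := by omega
        rw [act_of_gt k p w h2, act_of_eq1 l p _ hpl, act_of_eq1 k pL _ (by simp [hpL]; omega),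
            act_of_eq1 l p w hpl, act_of_eq1 k pL _ (by simp [hpL]; omega),
            act_of_lt l pK _ (by simp [hpK]; omega)]
        refine Prod.ext rfl ?_
        show xg m (k:ℕ) * (xg m (l:ℕ) * (bg m (k:ℕ) * w))
            = bg m ((l:ℕ)-1) * (xg m (k:ℕ) * (xg m (l:ℕ) * w))
        simp only [← mul_assoc]
        rw [show (l:ℕ)-1 = (k:ℕ) by omega, show (l:ℕ) = (k:ℕ)+1 from hkl.symm]
        have h34 := fr34 (show (k:ℕ) < m by omega)
        simp only [← mul_assoc] at h34
        rw [← h34]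
      · -- p ≥ k+3 = l+2
        rw [act_of_gt k p w (by omega), act_of_gt l p _ (by omega), act_of_gt k p _ (by omega),
            act_of_gt l p w (by omega), act_of_gt k p _ (by omega), act_of_gt l p _ (by omega)]
        have : bg m (k:ℕ) * (bg m (l:ℕ) * (bg m (k:ℕ) * w))
            = bg m (l:ℕ) * (bg m (k:ℕ) * (bg m (l:ℕ) * w)) := by
          simp only [← mul_assoc]
          rw [fr1 hkl (show (l:ℕ) < m by omega)]
        rw [this]

lemma act_comm (k l : Fin (m+1)) (hkl : (k : ℕ) + 2 ≤ (l : ℕ)) (s : Cos m) :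
    act k (act l s) = act l (act k s) := by
  obtain ⟨p, w⟩ := s
  have hl : (l : ℕ) < m + 1 := l.isLt
  have hp : (p : ℕ) < m + 2 := p.isLt
  set pK : Fin (m+2) := ⟨(k : ℕ), Nat.lt_succ_of_lt k.isLt⟩ with hpK
  set pK1 : Fin (m+2) := ⟨(k : ℕ) + 1, Nat.succ_lt_succ k.isLt⟩ with hpK1
  set pL : Fin (m+2) := ⟨(l : ℕ), Nat.lt_succ_of_lt l.isLt⟩ with hpL
  set pL1 : Fin (m+2) := ⟨(l : ℕ) + 1, Nat.succ_lt_succ l.isLt⟩ with hpL1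
  rcases Nat.lt_trichotomy (p : ℕ) (k : ℕ) with h | h | h
  · rw [act_of_lt l p w (by omega), act_of_lt k p _ h, act_of_lt k p w h,
        act_of_lt l p _ (by omega)]
    have : bg m ((k:ℕ)-1) * (bg m ((l:ℕ)-1) * w) = bg m ((l:ℕ)-1) * (bg m ((k:ℕ)-1) * w) := by
      simp only [← mul_assoc]
      rw [fr2 (show (k:ℕ)-1+2 ≤ (l:ℕ)-1 by omega) (show (l:ℕ)-1 < m by omega)]
    rw [this]
  · rw [act_of_lt l p w (by omega), act_of_eq k p _ h, act_of_eq k p w h,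
        act_of_lt l pK1 w (by simp [hpK1]; omega)]
  · rcases Nat.lt_or_ge (p : ℕ) ((k : ℕ) + 2) with h2 | h2
    · -- p = k+1 < l
      have hpk : (p : ℕ) = (k : ℕ) + 1 := by omega
      rw [act_of_lt l p w (by omega), act_of_eq1 k p _ hpk, act_of_eq1 k p w hpk,
          act_of_lt l pK _ (by simp [hpK]; omega)]
      have : xg m (k:ℕ) * (bg m ((l:ℕ)-1) * w) = bg m ((l:ℕ)-1) * (xg m (k:ℕ) * w) := by
        simp only [← mul_assoc]
        rw [fr5 (show (k:ℕ) ≠ (l:ℕ)-1 by omega) (show (k:ℕ) ≠ ((l:ℕ)-1)+1 by omega)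
            (show (l:ℕ)-1 < m by omega) (show (k:ℕ) < m+1 by omega)]
      rw [this]
    · rcases Nat.lt_trichotomy (p : ℕ) (l : ℕ) with h3 | h3 | h3
      · -- k+2 ≤ p < l
        rw [act_of_lt l p w h3, act_of_gt k p _ h2, act_of_gt k p w h2, act_of_lt l p _ h3]
        have : bg m (k:ℕ) * (bg m ((l:ℕ)-1) * w) = bg m ((l:ℕ)-1) * (bg m (k:ℕ) * w) := by
          simp only [← mul_assoc]
          rw [fr2 (show (k:ℕ)+2 ≤ (l:ℕ)-1 by omega) (show (l:ℕ)-1 < m by omega)]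
        rw [this]
      · rw [act_of_eq l p w h3, act_of_gt k pL1 w (by simp [hpL1]; omega),
            act_of_gt k p w (by omega), act_of_eq l p _ h3]
      · rcases Nat.lt_or_ge (p : ℕ) ((l : ℕ) + 2) with h4 | h4
        · -- p = l+1
          have hpl : (p : ℕ) = (l : ℕ) + 1 := by omega
          rw [act_of_eq1 l p w hpl, act_of_gt k pL _ (by simp [hpL]; omega),
              act_of_gt k p w (by omega), act_of_eq1 l p _ hpl]
          have : bg m (k:ℕ) * (xg m (l:ℕ) * w) = xg m (l:ℕ) * (bg m (k:ℕ) * w) := by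
            simp only [← mul_assoc]
            rw [fr5 (show (l:ℕ) ≠ (k:ℕ) by omega) (show (l:ℕ) ≠ (k:ℕ)+1 by omega)
                (show (k:ℕ) < m by omega) (show (l:ℕ) < m+1 by omega)]
          rw [this]
        · rw [act_of_gt l p w h4, act_of_gt k p _ (by omega), act_of_gt k p w (by omega),
              act_of_gt l p _ h4]
          have : bg m (k:ℕ) * (bg m (l:ℕ) * w) = bg m (l:ℕ) * (bg m (k:ℕ) * w) := by
            simp only [← mul_assoc]
            rw [fr2 hkl (show (l:ℕ) < m by omega)]
          rw [this]

end FrozenEmbed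
namespace FrozenEmbed
variable {m : ℕ}

lemma sPerm_rels : ∀ r ∈ braidRels (m+1), FreeGroup.lift (sPerm (m := m)) r = 1 := by
  rintro r (⟨i, j, hij, rfl⟩ | ⟨i, j, hij, rfl⟩) <;>
    simp only [map_mul, map_inv, FreeGroup.lift_apply_of, mul_inv_eq_one] <;>
    refine Equiv.ext fun s => ?_ <;> simp only [Equiv.Perm.mul_apply]
  · exact act_braid i j hij _
  · exact act_comm i j hij _

/-- The coset permutation representation of the braid group. -/
def Phi : Braid (m+1) →* Equiv.Perm (Cos m) := PresentedGroup.toGroup sPerm_rels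

lemma Phi_of (k : Fin (m+1)) : Phi (PresentedGroup.of k) = sPerm k :=
  PresentedGroup.toGroup.of _

lemma Phi_bb {a : ℕ} (h : a < m + 1) : Phi (bb m a) = sPerm (⟨a, h⟩ : Fin (m+1)) := by
  rw [bb, dif_pos h, Phi_of]

lemma sPerm_apply (k : Fin (m+1)) (s : Cos m) : sPerm k s = act k s := rfl
lemma sPerm_inv_apply (k : Fin (m+1)) (s : Cos m) : (sPerm k)⁻¹ s = actInv k s := rfl

/-- The product `β_k β_{k-1} ⋯ β_1` appearing in `Xword`. -/
def U (m k : ℕ) : Braid (m+1) := ((List.range k).map fun j => bb m (k - j)).prod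

lemma Xword_eq_U (k : ℕ) : Xword m k = U m k * bb m 0 * bb m 0 * (U m k)⁻¹ := rfl

lemma U_succ (k : ℕ) : U m (k+1) = bb m (k+1) * U m k := by
  rw [U, U, List.range_succ_eq_map, List.map_cons, List.prod_cons, List.map_map]
  congr 2
  refine List.map_congr_left fun a _ => ?_
  simp only [Function.comp_apply, Nat.succ_sub_succ]

lemma Xword_succ (k : ℕ) : Xword m (k+1) = bb m (k+1) * Xword m k * (bb m (k+1))⁻¹ := by
  rw [Xword_eq_U, Xword_eq_U, U_succ]
  group

/-- base point of the coset space -/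
def p0 (m : ℕ) : Fin (m + 2) := ⟨0, by omega⟩

lemma Phi_Xword {k : ℕ} (hk : k ≤ m) (w : BrFrozen m) :
    Phi (Xword m k) (p0 m, w) = (p0 m, xg m k * w) := by
  induction k generalizing w with
  | zero =>
      have hK : (0 : ℕ) < m + 1 := by omega
      have h0 : Xword m 0 = bb m 0 * bb m 0 := by
        rw [Xword_eq_U]
        show U m 0 * bb m 0 * bb m 0 * (U m 0)⁻¹ = _
        rw [U]; simp
      rw [h0, map_mul, Phi_bb hK, Equiv.Perm.mul_apply, sPerm_apply, sPerm_apply]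
      rw [act_of_eq ⟨0, hK⟩ (p0 m) w (by simp [p0])]
      rw [act_of_eq1 ⟨0, hK⟩ ⟨(((⟨0, hK⟩ : Fin (m+1)) : ℕ)) + 1,
            Nat.succ_lt_succ (⟨0, hK⟩ : Fin (m+1)).isLt⟩ w (by simp)]
      exact Prod.ext (Fin.ext (by simp [p0])) rfl
  | succ k ih =>
      have hK : k + 1 < m + 1 := by omega
      have hKval : ((⟨k+1, hK⟩ : Fin (m+1)) : ℕ) = k + 1 := rfl
      rw [Xword_succ, map_mul, map_mul, map_inv, Phi_bb hK]
      rw [Equiv.Perm.mul_apply, Equiv.Perm.mul_apply, sPerm_inv_apply]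
      have e1 : actInv (⟨k+1, hK⟩ : Fin (m+1)) (p0 m, w) = (p0 m, (bg m k)⁻¹ * w) := by
        rw [actInv, if_neg (by simp [p0, hKval]), if_neg (by simp [p0, hKval]),
            if_pos (by simp [p0, hKval])]
        rw [hKval]
        norm_num
      rw [e1, ih (by omega), sPerm_apply]
      rw [act_of_lt ⟨k+1, hK⟩ (p0 m) _ (by simp [p0, hKval])]
      refine Prod.ext rfl ?_
      show bg m (((⟨k+1, hK⟩ : Fin (m+1)) : ℕ) - 1) * (xg m k * ((bg m k)⁻¹ * w))
          = xg m (k+1) * w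
      rw [hKval]
      have h3 := fr3 (m := m) (show k < m by omega)
      calc bg m (k+1-1) * (xg m k * ((bg m k)⁻¹ * w))
          = (bg m k * xg m k) * ((bg m k)⁻¹ * w) := by norm_num [mul_assoc]
        _ = (xg m (k+1) * bg m k) * ((bg m k)⁻¹ * w) := by rw [h3]
        _ = xg m (k+1) * w := by group

end FrozenEmbed
namespace FrozenEmbed
variable {m : ℕ}

section AbstractGroup
variable {G : Type*} [Group G]

lemma abstract_base {a b : G} (h : a*b*a = b*a*b) :
    b*(a*a)*b*(a*a) = (a*a)*b*(a*a)*b := by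
  have L : b*(a*a)*b*(a*a) = (b*a)*(b*a)*(b*a) := by
    calc b*(a*a)*b*(a*a) = b*a*(a*b*a)*a := by group
      _ = b*a*(b*a*b)*a := by rw [h]
      _ = (b*a)*(b*a)*(b*a) := by group
  have R : (a*a)*b*(a*a)*b = (a*b)*(a*b)*(a*b) := by
    calc (a*a)*b*(a*a)*b = a*(a*b*a)*(a*b) := by group
      _ = a*(b*a*b)*(a*b) := by rw [h]
      _ = (a*b)*(a*b)*(a*b) := by group
  have E : (b*a)*(b*a)*(b*a) = (a*b)*(a*b)*(a*b) := by
    calc (b*a)*(b*a)*(b*a) = (b*a*b)*(a*b*a) := by group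
      _ = (a*b*a)*(a*b*a) := by rw [← h]
      _ = (a*b*a)*(b*a*b) := by nth_rewrite 2 [h]; rfl
      _ = (a*b)*(a*b)*(a*b) := by group
  rw [L, E, ← R]

lemma abstract_P_step {b c x : G} (hbc : b*c*b = c*b*c) (hxc : c*x = x*c)
    (hP : b*x*b*x = x*b*x*b) :
    c*(b*x*b⁻¹)*c*(b*x*b⁻¹) = (b*x*b⁻¹)*c*(b*x*b⁻¹)*c := by
  have h1 : b⁻¹*(c*b) = c*b*c⁻¹ := by
    calc b⁻¹*(c*b) = b⁻¹*(c*b*c)*c⁻¹ := by group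
      _ = b⁻¹*(b*c*b)*c⁻¹ := by rw [← hbc]
      _ = c*b*c⁻¹ := by group
  have einv : b⁻¹*c⁻¹*b⁻¹ = c⁻¹*b⁻¹*c⁻¹ := by
    calc b⁻¹*c⁻¹*b⁻¹ = (b*c*b)⁻¹ := by group
      _ = (c*b*c)⁻¹ := by rw [hbc]
      _ = c⁻¹*b⁻¹*c⁻¹ := by group
  have h2 : c⁻¹*b⁻¹*c = b*c⁻¹*b⁻¹ := by
    calc c⁻¹*b⁻¹*c = b*(b⁻¹*c⁻¹*b⁻¹)*c := by group
      _ = b*(c⁻¹*b⁻¹*c⁻¹)*c := by rw [einv]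
      _ = b*c⁻¹*b⁻¹ := by group
  have hxc1 : x*c = c*x := hxc.symm
  have hxc2 : c⁻¹*x = x*c⁻¹ := (Commute.inv_left hxc).eq
  have hP' : b*(x*b*x) = (x*b*x)*b := by
    calc b*(x*b*x) = b*x*b*x := by group
      _ = x*b*x*b := hP
      _ = (x*b*x)*b := by group
  have L : c*(b*x*b⁻¹)*c*(b*x*b⁻¹) = (b*c)*(x*b*x)*(b*(c⁻¹*b⁻¹)) := by
    calc c*(b*x*b⁻¹)*c*(b*x*b⁻¹)
        = c*b*x*(b⁻¹*(c*b))*x*b⁻¹ := by group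
      _ = c*b*x*(c*b*c⁻¹)*x*b⁻¹ := by rw [h1]
      _ = c*b*(x*c)*b*(c⁻¹*x)*b⁻¹ := by group
      _ = c*b*(c*x)*b*(x*c⁻¹)*b⁻¹ := by rw [hxc1, hxc2]
      _ = (c*b*c)*(x*b*x)*(c⁻¹*b⁻¹) := by group
      _ = (b*c*b)*(x*b*x)*(c⁻¹*b⁻¹) := by rw [hbc]
      _ = b*c*(b*(x*b*x))*(c⁻¹*b⁻¹) := by group
      _ = b*c*((x*b*x)*b)*(c⁻¹*b⁻¹) := by rw [hP']
      _ = (b*c)*(x*b*x)*(b*(c⁻¹*b⁻¹)) := by group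
  have R : (b*x*b⁻¹)*c*(b*x*b⁻¹)*c = (b*c)*(x*b*x)*(b*(c⁻¹*b⁻¹)) := by
    calc (b*x*b⁻¹)*c*(b*x*b⁻¹)*c
        = b*x*(b⁻¹*(c*b))*x*(b⁻¹*c) := by group
      _ = b*x*(c*b*c⁻¹)*x*(b⁻¹*c) := by rw [h1]
      _ = b*(x*c)*b*(c⁻¹*x)*(b⁻¹*c) := by group
      _ = b*(c*x)*b*(x*c⁻¹)*(b⁻¹*c) := by rw [hxc1, hxc2]
      _ = (b*c)*(x*b*x)*(c⁻¹*b⁻¹*c) := by group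
      _ = (b*c)*(x*b*x)*(b*c⁻¹*b⁻¹) := by rw [h2]
      _ = (b*c)*(x*b*x)*(b*(c⁻¹*b⁻¹)) := by group
  rw [L, ← R]

lemma abstract_rel4 {b x : G} (hP : b*x*b*x = x*b*x*b) :
    b*(b*x*b⁻¹)*b⁻¹ = (b*x*b⁻¹)⁻¹*x*(b*x*b⁻¹) := by
  have hP' : b*(x*b*x) = (x*b*x)*b := by
    calc b*(x*b*x) = b*x*b*x := by group
      _ = x*b*x*b := hP
      _ = (x*b*x)*b := by group
  have hPinv : b⁻¹*(x*b*x) = (x*b*x)*b⁻¹ :=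
    (Commute.inv_left (hP' : Commute b (x*b*x))).eq
  have : (b*x*b⁻¹)⁻¹*x*(b*x*b⁻¹) = b*(b*x*b⁻¹)*b⁻¹ := by
    calc (b*x*b⁻¹)⁻¹*x*(b*x*b⁻¹) = b*x⁻¹*(b⁻¹*(x*b*x))*b⁻¹ := by group
      _ = b*x⁻¹*((x*b*x)*b⁻¹)*b⁻¹ := by rw [hPinv]
      _ = b*(b*x*b⁻¹)*b⁻¹ := by group
  exact this.symm

end AbstractGroup

lemma bb_out {a : ℕ} (h : m + 1 ≤ a) : bb m a = 1 := dif_neg (by omega)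

lemma commute_bb_U {b k : ℕ} (h : k + 2 ≤ b) : Commute (bb m b) (U m k) := by
  induction k with
  | zero => rw [U]; simp
  | succ k ih =>
      rw [U_succ]
      refine Commute.mul_right ?_ (ih (by omega))
      rcases Nat.lt_or_ge b (m+1) with hb | hb
      · exact (bb_comm (show (k+1)+2 ≤ b by omega) (by omega)).symm
      · rw [bb_out hb]; exact Commute.one_left _

lemma commute_bb_Xword {b k : ℕ} (h : k + 2 ≤ b) (hb : b ≤ m) : Commute (bb m b) (Xword m k) := by
  rw [Xword_eq_U]
  have h0 : Commute (bb m b) (bb m 0) := (bb_comm (show 0+2 ≤ b by omega) hb).symm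
  have hU := commute_bb_U (m := m) (b := b) (k := k) h
  exact ((hU.mul_right h0).mul_right h0).mul_right hU.inv_right

/-- push `β_a` through `U k` (for `1 ≤ a < k`): `β_a U_k = U_k β_{a+1}`. -/
lemma push_U {a k : ℕ} (ha : 1 ≤ a) (hak : a + 1 ≤ k) (hk : k ≤ m) :
    bb m a * U m k = U m k * bb m (a+1) := by
  induction k with
  | zero => omega
  | succ k ih =>
      rcases Nat.lt_or_ge (a+1) (k+1) with hlt | hge
      · rw [U_succ, ← mul_assoc, bb_comm (show a+2 ≤ k+1 by omega) (by omega), mul_assoc,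
          ih (by omega) (by omega), ← mul_assoc]
      · -- k = a ≥ 1
        have hka : k = a := by omega
        subst hka
        obtain ⟨k', rfl⟩ : ∃ k', k = k' + 1 := ⟨k - 1, by omega⟩
        rw [U_succ, U_succ]
        have hbr : bb m (k'+1) * bb m (k'+1+1) * bb m (k'+1)
            = bb m (k'+1+1) * bb m (k'+1) * bb m (k'+1+1) := bb_braid rfl (by omega)
        have hcU : Commute (bb m (k'+1+1)) (U m k') := commute_bb_U (by omega)
        calc bb m (k'+1) * (bb m (k'+1+1) * (bb m (k'+1) * U m k'))
            = (bb m (k'+1) * bb m (k'+1+1) * bb m (k'+1)) * U m k' := by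
              simp only [← mul_assoc]
          _ = (bb m (k'+1+1) * bb m (k'+1) * bb m (k'+1+1)) * U m k' := by rw [hbr]
          _ = bb m (k'+1+1) * bb m (k'+1) * (bb m (k'+1+1) * U m k') := by
              simp only [← mul_assoc]
          _ = bb m (k'+1+1) * bb m (k'+1) * (U m k' * bb m (k'+1+1)) := by rw [hcU.eq]
          _ = bb m (k'+1+1) * (bb m (k'+1) * U m k') * bb m (k'+1+1) := by
              simp only [← mul_assoc]

/-- `β_a` commutes with `Xword j` for `1 ≤ a ≤ j - 1`. -/
lemma commute_bb_Xword' {a j : ℕ} (ha : 1 ≤ a) (haj : a + 1 ≤ j) (hj : j ≤ m) :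
    Commute (bb m a) (Xword m j) := by
  have hpush := push_U (m := m) ha haj hj
  have h0 : Commute (bb m (a+1)) (bb m 0) := (bb_comm (show 0+2 ≤ a+1 by omega) (by omega)).symm
  have hUinv : bb m (a+1) * (U m j)⁻¹ = (U m j)⁻¹ * bb m a := by
    calc bb m (a+1) * (U m j)⁻¹
        = (U m j)⁻¹ * (U m j * bb m (a+1) * (U m j)⁻¹) := by group
      _ = (U m j)⁻¹ * (bb m a * U m j * (U m j)⁻¹) := by rw [← hpush, mul_assoc]
      _ = (U m j)⁻¹ * bb m a := by group
  show bb m a * Xword m j = Xword m j * bb m a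
  rw [Xword_eq_U]
  calc bb m a * (U m j * bb m 0 * bb m 0 * (U m j)⁻¹)
      = (bb m a * U m j) * bb m 0 * bb m 0 * (U m j)⁻¹ := by simp only [← mul_assoc]
    _ = (U m j * bb m (a+1)) * bb m 0 * bb m 0 * (U m j)⁻¹ := by rw [hpush]
    _ = U m j * bb m 0 * bb m 0 * (bb m (a+1) * (U m j)⁻¹) := by
        calc (U m j * bb m (a+1)) * bb m 0 * bb m 0 * (U m j)⁻¹
            = U m j * ((bb m (a+1) * bb m 0) * bb m 0) * (U m j)⁻¹ := by
              simp only [← mul_assoc]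
          _ = U m j * ((bb m 0 * bb m (a+1)) * bb m 0) * (U m j)⁻¹ := by rw [h0.eq]
          _ = U m j * (bb m 0 * (bb m (a+1) * bb m 0)) * (U m j)⁻¹ := by
              simp only [← mul_assoc]
          _ = U m j * (bb m 0 * (bb m 0 * bb m (a+1))) * (U m j)⁻¹ := by rw [h0.eq]
          _ = _ := by simp only [← mul_assoc]
    _ = U m j * bb m 0 * bb m 0 * ((U m j)⁻¹ * bb m a) := by rw [hUinv]
    _ = _ := by simp only [← mul_assoc]

lemma Xword_zero : Xword m 0 = bb m 0 * bb m 0 := by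
  rw [Xword_eq_U]
  show U m 0 * bb m 0 * bb m 0 * (U m 0)⁻¹ = _
  rw [U]; simp

/-- the key mixed relation `β_{i+1} (X_{i+1} β_{i+1} X_{i+1}) = (X_{i+1} β_{i+1} X_{i+1}) β_{i+1}`. -/
lemma P_lemma {i : ℕ} (hi : i + 1 ≤ m) :
    bb m (i+1) * Xword m i * bb m (i+1) * Xword m i
      = Xword m i * bb m (i+1) * Xword m i * bb m (i+1) := by
  induction i with
  | zero =>
      have h : bb m 0 * bb m 1 * bb m 0 = bb m 1 * bb m 0 * bb m 1 := bb_braid rfl (by omega)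
      rw [Xword_zero]
      have := abstract_base h
      calc bb m (0+1) * (bb m 0 * bb m 0) * bb m (0+1) * (bb m 0 * bb m 0)
          = bb m 1 * (bb m 0 * bb m 0) * bb m 1 * (bb m 0 * bb m 0) := rfl
        _ = (bb m 0 * bb m 0) * bb m 1 * (bb m 0 * bb m 0) * bb m 1 := this
        _ = _ := rfl
  | succ i ih =>
      have hbc : bb m (i+1) * bb m (i+1+1) * bb m (i+1)
          = bb m (i+1+1) * bb m (i+1) * bb m (i+1+1) := bb_braid rfl (by omega)
      have hxc : bb m (i+1+1) * Xword m i = Xword m i * bb m (i+1+1) :=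
        (commute_bb_Xword (show i+2 ≤ i+1+1 by omega) (by omega)).eq
      have hP := ih (by omega)
      rw [Xword_succ]
      exact abstract_P_step hbc hxc hP

/-- image of the generators of `BrFrozen m` in `Braid (m+1)`. -/
def fim (m : ℕ) : FGen m → Braid (m+1)
  | .X k => Xword m (k : ℕ)
  | .beta i => PresentedGroup.of i.succ

lemma fim_beta (i : Fin m) : fim m (FGen.beta i) = bb m ((i:ℕ)+1) := by
  have h : (i:ℕ)+1 < m+1 := by omega
  rw [fim, bb, dif_pos h]
  congr 1

lemma fim_X (k : Fin (m+1)) : fim m (FGen.X k) = Xword m (k : ℕ) := rfl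

lemma fim_rels : ∀ r ∈ frozenRels m, FreeGroup.lift (fim m) r = 1 := by
  rintro r (⟨i, j, hij, rfl⟩ | ⟨i, j, hij, rfl⟩ | ⟨i, rfl⟩ | ⟨i, rfl⟩ | ⟨i, j, hj1, hj2, rfl⟩) <;>
    simp only [B, Y, map_mul, map_inv, FreeGroup.lift_apply_of, mul_inv_eq_one, fim_beta, fim_X]
  · exact bb_braid (by omega) (by omega)
  · exact bb_comm (by omega) (by omega)
  · rw [Fin.coe_castSucc, Fin.val_succ]
    exact (Xword_succ (i : ℕ)).symm
  · rw [Fin.val_succ]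
    rw [Xword_succ (i : ℕ)]
    exact abstract_rel4 (P_lemma (by omega))
  · -- commuting case
    have hc : bb m ((i:ℕ)+1) * Xword m (j:ℕ) = Xword m (j:ℕ) * bb m ((i:ℕ)+1) := by
      rcases Nat.lt_or_ge (j : ℕ) (i : ℕ) with hji | hji
      · exact (commute_bb_Xword (m := m) (b := (i:ℕ)+1) (k := (j:ℕ))
          (by omega) (by omega)).eq
      · have hj : (i:ℕ)+2 ≤ (j:ℕ) := by omega
        exact (commute_bb_Xword' (m := m) (a := (i:ℕ)+1) (j := (j:ℕ))
          (by omega) (by omega) (by omega)).eq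
    rw [hc]
    group

/-- The homomorphism `ι : BrFrozen m →* Braid (m+1)`. -/
def iota : BrFrozen m →* Braid (m+1) := PresentedGroup.toGroup fim_rels

lemma iota_beta (i : Fin m) :
    iota (PresentedGroup.of (FGen.beta i)) = PresentedGroup.of (i.succ : Fin (m+1)) :=
  PresentedGroup.toGroup.of _

lemma iota_X (k : Fin (m+1)) :
    iota (PresentedGroup.of (FGen.X k)) = Xword m (k : ℕ) :=
  PresentedGroup.toGroup.of _

end FrozenEmbed

namespace FrozenEmbed
variable {m : ℕ}

/-- The set of elements `h` for which the permutation `Φ(ι h)` acts on the fiber over the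
base point by left multiplication by `h`. -/
def goodSub (m : ℕ) : Subgroup (BrFrozen m) where
  carrier := {h | ∀ w, Phi (iota h) (p0 m, w) = (p0 m, h * w)}
  one_mem' := fun w => by simp
  mul_mem' := by
    intro a b ha hb w
    rw [map_mul, map_mul, Equiv.Perm.mul_apply, hb w, ha (b*w), mul_assoc]
  inv_mem' := by
    intro a ha w
    rw [map_inv, map_inv]
    have h2 : Phi (iota a) (p0 m, a⁻¹ * w) = (p0 m, w) := by
      rw [ha (a⁻¹ * w), mul_inv_cancel_left]
    calc (Phi (iota a))⁻¹ (p0 m, w)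
        = (Phi (iota a))⁻¹ (Phi (iota a) (p0 m, a⁻¹ * w)) := by rw [h2]
      _ = (p0 m, a⁻¹ * w) := Equiv.symm_apply_apply _ _

lemma key_eval (h : BrFrozen m) (w : BrFrozen m) :
    Phi (iota h) (p0 m, w) = (p0 m, h * w) := by
  refine PresentedGroup.generated_by (frozenRels m) (goodSub m) ?_ h w
  intro g
  show ∀ w, _
  cases g with
  | X k =>
      intro w
      rw [iota_X, Phi_Xword (show (k : ℕ) ≤ m by omega)]
      rw [xg_eq k.isLt]
  | beta i =>
      intro w
      rw [iota_beta]
      have hi : ((i:ℕ)+1) < m+1 := by omega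
      have hfb := fim_beta i
      simp only [fim] at hfb
      rw [hfb, Phi_bb hi, sPerm_apply, act_of_lt ⟨(i:ℕ)+1, hi⟩ (p0 m) w (by simp [p0])]
      have : bg m (((⟨(i:ℕ)+1, hi⟩ : Fin (m+1)) : ℕ) - 1) = PresentedGroup.of (FGen.beta i) := by
        have : ((⟨(i:ℕ)+1, hi⟩ : Fin (m+1)) : ℕ) - 1 = (i : ℕ) := rfl
        rw [this, bg_eq i.isLt]
      rw [this]

lemma iota_injective : Function.Injective (iota (m := m)) := by
  intro a b hab
  have ha := key_eval a 1
  have hb := key_eval b 1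
  rw [hab] at ha
  have := ha.symm.trans hb
  simpa using this

end FrozenEmbed

/-- For every `n ≥ 1` (here `n = m+1`), the assignment `ι(β_i) = β_i` for `1 ≤ i ≤ n-1` and
`ι(X_i) = β_{i-1}⋯β_1·β_0²·β_1⁻¹⋯β_{i-1}⁻¹` for `1 ≤ i ≤ n` extends to a well-defined
group homomorphism `ι : Br_n^1 → Br_{n+1}`, and this homomorphism is injective. -/
theorem frozen_embeds_in_braid (m : ℕ) :
    ∃ ι : BrFrozen m →* Braid (m + 1),
      (∀ i : Fin m,
        ι (PresentedGroup.of (FGen.beta i)) = PresentedGroup.of (i.succ : Fin (m + 1))) ∧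
      (∀ k : Fin (m + 1), ι (PresentedGroup.of (FGen.X k)) = Xword m (k : ℕ)) ∧
      Function.Injective ι :=
  ⟨FrozenEmbed.iota, FrozenEmbed.iota_beta, FrozenEmbed.iota_X, FrozenEmbed.iota_injective⟩
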